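/- The adjoint action of x on D(2,1;α) is diagonalizable with eigenvalues in {-3/2, -1, -1/2, 0, 1/2, 1, 3/2}, where the eigenspaces g_j for j = -3/2,-1,-1/2,0,1/2,1,3/2 have dimensions 1,3,3,3,3,3,1 respectively, and g₀ equals the Cartan subalgebra spanned by h₁,h₂,h₃. -/

import Mathlib

open Matrix

open Module Submodule

lemma eig_span {ι K V : Type*} [Fintype ι] [Field K] [AddCommGroup V] [Module K V]
    (b : Basis ι K V) (f : Module.End K V) (μv : ι → K)
    (hf : ∀ i, f (b i) = μv i • b i) (μ : K) :
    Module.End.eigenspace f μ = Submodule.span K (b '' {i | μv i = μ}) := by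
  classical
  apply le_antisymm
  · intro v hv
    rw [Module.End.mem_eigenspace_iff] at hv
    set c : ι → K := b.equivFun v with hc
    have hfv : f v = ∑ i, (μv i * c i) • b i := by
      conv_lhs => rw [← b.sum_equivFun v]
      rw [_root_.map_sum]
      refine Finset.sum_congr rfl fun i _ => ?_
      rw [_root_.map_smul, hf, smul_smul, mul_comm]
    have hμv : μ • v = ∑ i, (μ * c i) • b i := by
      conv_lhs => rw [← b.sum_equivFun v]
      rw [Finset.smul_sum]
      exact Finset.sum_congr rfl fun i _ => by rw [smul_smul]
    have hco : ∀ i, μv i * c i = μ * c i := by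
      intro i
      have h1 : b.equivFun (f v) = fun j => μv j * c j := by
        rw [hfv]; rw [← b.equivFun_symm_apply, LinearEquiv.apply_symm_apply]
      have h2 : b.equivFun (μ • v) = fun j => μ * c j := by
        rw [hμv]; rw [← b.equivFun_symm_apply, LinearEquiv.apply_symm_apply]
      have := h1.symm.trans (by rw [hv, h2])
      exact congrFun this i
    have hzero : ∀ i, μv i ≠ μ → c i = 0 := by
      intro i hi
      have : (μv i - μ) * c i = 0 := by ring_nf; linear_combination hco i
      rcases mul_eq_zero.1 this with h | h
      · exact absurd (sub_eq_zero.1 h) hi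
      · exact h
    have hv' : v = ∑ i, c i • b i := (b.sum_equivFun v).symm
    rw [hv']
    refine Submodule.sum_mem _ fun i _ => ?_
    by_cases hi : μv i = μ
    · exact Submodule.smul_mem _ _ (Submodule.subset_span ⟨i, hi, rfl⟩)
    · rw [hzero i hi, zero_smul]; exact Submodule.zero_mem _
  · rw [Submodule.span_le]
    rintro _ ⟨i, hi, rfl⟩
    rw [SetLike.mem_coe, Module.End.mem_eigenspace_iff, hf, hi]

lemma finrank_span_b {ι K V : Type*} [Fintype ι] [DecidableEq ι] [Field K] [AddCommGroup V]
    [Module K V] (b : Basis ι K V) (s : Finset ι) :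
    Module.finrank K (Submodule.span K (b '' ↑s)) = s.card := by
  classical
  have hli : LinearIndependent K fun x : (↑s : Set ι) => b x :=
    b.linearIndependent.comp _ Subtype.val_injective
  have him := LinearIndepOn.id_image (v := ⇑b) (s := (↑s : Set ι)) hli
  rw [finrank_span_set_eq_card him, Set.toFinset_image, Finset.toFinset_coe,
    Finset.card_image_of_injective _ b.injective]


/-- The Cartan matrix of `D(2,1;α)`. -/
def cartanD21 (α : ℂ) : Matrix (Fin 3) (Fin 3) ℂ :=
  !![0, 1, α; 1, 0, -1-α; α, -1-α, 0]

/-- The grading element `x = ((α+1)/(2α))h₁ + (α/(2(α+1)))h₂ + (1/(2α(α+1)))h₃`. -/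
noncomputable def xElt (α : ℂ) {g : Type*} [AddCommGroup g] [Module ℂ g]
    (H : Fin 3 → g) : g :=
  ((α+1)/(2*α)) • H 0 + (α/(2*(α+1))) • H 1 + (1/(2*α*(α+1))) • H 2

set_option maxHeartbeats 4000000 in
/-- the adjoint action of the grading element `x` on the 17-dimensional
Lie superalgebra `D(2,1;α)` is diagonalizable, its eigenvalues lie in
`{-3/2,-1,-1/2,0,1/2,1,3/2}`, the eigenspaces have dimensions `1,3,3,3,3,3,1`
respectively, and the zero eigenspace `g₀` is the Cartan subalgebra spanned by
`h₁,h₂,h₃`. -/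
theorem d21_adx_diagonalizable (α : ℂ) (hα : α ≠ 0) (hα' : α ≠ -1)
    (g : Type*) [AddCommGroup g] [Module ℂ g]
    (brk : g →ₗ[ℂ] g →ₗ[ℂ] g)
    (E F H : Fin 3 → g)
    (hEF : ∀ i j, brk (E i) (F j) = if i = j then H i else 0)
    (hFE : ∀ i j, brk (F i) (E j) = if i = j then H j else 0)
    (hHE : ∀ i j, brk (H i) (E j) = cartanD21 α i j • E j)
    (hHF : ∀ i j, brk (H i) (F j) = -(cartanD21 α i j) • F j)
    (hEH : ∀ i j, brk (E i) (H j) = -(cartanD21 α j i) • E i)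
    (hFH : ∀ i j, brk (F i) (H j) = (cartanD21 α j i) • F i)
    (hHH : ∀ i j, brk (H i) (H j) = 0)
    (hEE : ∀ i, brk (E i) (E i) = 0)
    (hFF : ∀ i, brk (F i) (F i) = 0)
    (hEsym : ∀ i j, brk (E i) (E j) = brk (E j) (E i))
    (hFsym : ∀ i j, brk (F i) (F j) = brk (F j) (F i))
    (hJodd : ∀ u ∈ Set.range E ∪ Set.range F, ∀ v ∈ Set.range E ∪ Set.range F, ∀ c,
        brk u (brk v c) = brk (brk u v) c - brk v (brk u c))
    (hJH : ∀ i (a b : g), brk (H i) (brk a b) = brk (brk (H i) a) b + brk a (brk (H i) b))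
    (b : Basis (Fin 17) ℂ g)
    (hb : (⇑b : Fin 17 → g) =
      ![brk (F 0) (brk (F 1) (F 2)),
        brk (F 0) (F 1), brk (F 0) (F 2), brk (F 1) (F 2),
        F 0, F 1, F 2,
        H 0, H 1, H 2,
        E 0, E 1, E 2,
        brk (E 0) (E 1), brk (E 0) (E 2), brk (E 1) (E 2),
        brk (E 0) (brk (E 1) (E 2))]) :
    (⨆ μ : ℂ, Module.End.eigenspace (brk (xElt α H)) μ) = ⊤ ∧
    (∀ μ : ℂ, Module.End.HasEigenvalue (brk (xElt α H) : Module.End ℂ g) μ →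
        μ ∈ ({-3/2, -1, -1/2, 0, 1/2, 1, 3/2} : Set ℂ)) ∧
    Module.finrank ℂ (Module.End.eigenspace (brk (xElt α H)) (-3/2)) = 1 ∧
    Module.finrank ℂ (Module.End.eigenspace (brk (xElt α H)) (-1)) = 3 ∧
    Module.finrank ℂ (Module.End.eigenspace (brk (xElt α H)) (-1/2)) = 3 ∧
    Module.finrank ℂ (Module.End.eigenspace (brk (xElt α H)) 0) = 3 ∧
    Module.finrank ℂ (Module.End.eigenspace (brk (xElt α H)) (1/2)) = 3 ∧
    Module.finrank ℂ (Module.End.eigenspace (brk (xElt α H)) 1) = 3 ∧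
    Module.finrank ℂ (Module.End.eigenspace (brk (xElt α H)) (3/2)) = 1 ∧
    Module.End.eigenspace (brk (xElt α H)) 0 = Submodule.span ℂ {H 0, H 1, H 2} := by
  classical
  have h1 : α + 1 ≠ 0 := fun h => hα' (by linear_combination h)
  set x := xElt α H with hx
  set f : Module.End ℂ g := brk x with hfdef
  -- action on H, E, F
  have hxH : ∀ j, f (H j) = 0 := by
    intro j
    simp only [hfdef, hx, xElt, _root_.map_add, _root_.map_smul, LinearMap.add_apply, LinearMap.smul_apply,
      hHH, smul_zero, add_zero]
  have hxE : ∀ j, f (E j) = ((1:ℂ)/2) • E j := by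
    intro j
    simp only [hfdef, hx, xElt, _root_.map_add, _root_.map_smul, LinearMap.add_apply, LinearMap.smul_apply, hHE]
    fin_cases j <;>
      · simp only [cartanD21, Matrix.cons_val', Matrix.cons_val_zero, Matrix.cons_val_one,
          Matrix.head_cons, Matrix.empty_val', Matrix.cons_val_fin_one, Matrix.head_fin_const,
          Matrix.cons_val_two, Matrix.tail_cons, Fin.isValue, Matrix.of_apply, Fin.reduceFinMk, Matrix.cons_val]
        match_scalars
        field_simp
        ring
  have hxF : ∀ j, f (F j) = (-((1:ℂ)/2)) • F j := by
    intro j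
    simp only [hfdef, hx, xElt, _root_.map_add, _root_.map_smul, LinearMap.add_apply, LinearMap.smul_apply, hHF]
    fin_cases j <;>
      · simp only [cartanD21, Matrix.cons_val', Matrix.cons_val_zero, Matrix.cons_val_one,
          Matrix.head_cons, Matrix.empty_val', Matrix.cons_val_fin_one, Matrix.head_fin_const,
          Matrix.cons_val_two, Matrix.tail_cons, Fin.isValue, Matrix.of_apply, Fin.reduceFinMk, Matrix.cons_val]
        match_scalars
        field_simp
        ring
  -- x acts as a derivation
  have hJx : ∀ a c : g, f (brk a c) = brk (f a) c + brk a (f c) := by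
    intro a c
    simp only [hfdef, hx, xElt, _root_.map_add, _root_.map_smul, LinearMap.add_apply, LinearMap.smul_apply,
      hJH, smul_add]
    module
  have hxEE : ∀ i j, f (brk (E i) (E j)) = (1:ℂ) • brk (E i) (E j) := by
    intro i j
    rw [hJx, hxE, hxE, _root_.map_smul, LinearMap.smul_apply, _root_.map_smul]
    module
  have hxFF : ∀ i j, f (brk (F i) (F j)) = (-1:ℂ) • brk (F i) (F j) := by
    intro i j
    rw [hJx, hxF, hxF, _root_.map_smul, LinearMap.smul_apply, _root_.map_smul]
    module
  have hxEEE : f (brk (E 0) (brk (E 1) (E 2))) = ((3:ℂ)/2) • brk (E 0) (brk (E 1) (E 2)) := by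
    rw [hJx, hxE, hxEE, _root_.map_smul, LinearMap.smul_apply, _root_.map_smul]
    module
  have hxFFF : f (brk (F 0) (brk (F 1) (F 2))) = (-((3:ℂ)/2)) • brk (F 0) (brk (F 1) (F 2)) := by
    rw [hJx, hxF, hxFF, _root_.map_smul, LinearMap.smul_apply, _root_.map_smul]
    module
  -- eigenvalues on basis vectors
  set μv : Fin 17 → ℂ :=
    ![-3/2, -1, -1, -1, -1/2, -1/2, -1/2, 0, 0, 0, 1/2, 1/2, 1/2, 1, 1, 1, 3/2] with hμv
  have hf : ∀ i, f (b i) = μv i • b i := by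
    intro i
    rw [show b i = (⇑b : Fin 17 → g) i from rfl, hb]
    fin_cases i
    · exact hxFFF.trans (by norm_num [hμv, neg_smul])
    · exact (hxFF 0 1).trans (by norm_num [hμv, neg_smul])
    · exact (hxFF 0 2).trans (by norm_num [hμv, neg_smul])
    · exact (hxFF 1 2).trans (by norm_num [hμv, neg_smul])
    · exact (hxF 0).trans (by norm_num [hμv, neg_smul])
    · exact (hxF 1).trans (by norm_num [hμv, neg_smul])
    · exact (hxF 2).trans (by norm_num [hμv, neg_smul])
    · exact (hxH 0).trans (by norm_num [hμv, neg_smul])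
    · exact (hxH 1).trans (by norm_num [hμv, neg_smul])
    · exact (hxH 2).trans (by norm_num [hμv, neg_smul])
    · exact (hxE 0).trans (by norm_num [hμv, neg_smul])
    · exact (hxE 1).trans (by norm_num [hμv, neg_smul])
    · exact (hxE 2).trans (by norm_num [hμv, neg_smul])
    · exact (hxEE 0 1).trans (by norm_num [hμv, neg_smul])
    · exact (hxEE 0 2).trans (by norm_num [hμv, neg_smul])
    · exact (hxEE 1 2).trans (by norm_num [hμv, neg_smul])
    · exact hxEEE.trans (by norm_num [hμv, neg_smul])
  have hES : ∀ μ : ℂ, Module.End.eigenspace f μ = Submodule.span ℂ (⇑b '' {i | μv i = μ}) :=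
    eig_span b f μv hf
  -- index sets
  have hset : ∀ (μ : ℂ) (t : Finset (Fin 17)), (∀ i, μv i = μ ↔ i ∈ t) →
      Module.End.eigenspace f μ = Submodule.span ℂ (⇑b '' ↑t) ∧
      Module.finrank ℂ (Module.End.eigenspace f μ) = t.card := by
    intro μ t ht
    have hseteq : {i | μv i = μ} = (↑t : Set (Fin 17)) := by
      ext i; simpa using ht i
    refine ⟨by rw [hES, hseteq], ?_⟩
    rw [hES, hseteq, finrank_span_b]
  -- top statement
  have htop : (⨆ μ : ℂ, Module.End.eigenspace f μ) = ⊤ := by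
    rw [eq_top_iff, ← b.span_eq, Submodule.span_le]
    rintro _ ⟨i, rfl⟩
    exact SetLike.le_def.mp (le_iSup (Module.End.eigenspace f) (μv i))
      (Module.End.mem_eigenspace_iff.mpr (hf i))
  have hvals : ∀ μ : ℂ, Module.End.HasEigenvalue f μ →
      μ ∈ ({-3/2, -1, -1/2, 0, 1/2, 1, 3/2} : Set ℂ) := by
    intro μ hμ
    by_contra hmem
    have hempty : {i : Fin 17 | μv i = μ} = ∅ := by
      ext i
      simp only [Set.mem_setOf_eq, Set.mem_empty_iff_false, iff_false]
      fin_cases i <;>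
        · intro h
          apply hmem
          rw [← h]
          norm_num [hμv, Set.mem_insert_iff]
    have h2 := hES μ
    rw [hempty, Set.image_empty, Submodule.span_empty] at h2
    exact hμ h2
  have hm32 := hset (-3/2) {0} (by intro i; fin_cases i <;> norm_num [hμv, Finset.mem_insert, Finset.mem_singleton] <;> decide)
  have hm1 := hset (-1) {1, 2, 3} (by intro i; fin_cases i <;> norm_num [hμv, Finset.mem_insert, Finset.mem_singleton] <;> decide)
  have hm12 := hset (-1/2) {4, 5, 6} (by intro i; fin_cases i <;> norm_num [hμv, Finset.mem_insert, Finset.mem_singleton] <;> decide)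
  have h0 := hset 0 {7, 8, 9} (by intro i; fin_cases i <;> norm_num [hμv, Finset.mem_insert, Finset.mem_singleton] <;> decide)
  have hp12 := hset (1/2) {10, 11, 12} (by intro i; fin_cases i <;> norm_num [hμv, Finset.mem_insert, Finset.mem_singleton] <;> decide)
  have hp1 := hset 1 {13, 14, 15} (by intro i; fin_cases i <;> norm_num [hμv, Finset.mem_insert, Finset.mem_singleton] <;> decide)
  have hp32 := hset (3/2) {16} (by intro i; fin_cases i <;> norm_num [hμv, Finset.mem_insert, Finset.mem_singleton] <;> decide)
  have hb7 : b 7 = H 0 := by rw [show b 7 = (⇑b : Fin 17 → g) 7 from rfl, hb]; exact rfl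
  have hb8 : b 8 = H 1 := by rw [show b 8 = (⇑b : Fin 17 → g) 8 from rfl, hb]; exact rfl
  have hb9 : b 9 = H 2 := by rw [show b 9 = (⇑b : Fin 17 → g) 9 from rfl, hb]; exact rfl
  have hzspan : Module.End.eigenspace f 0 = Submodule.span ℂ {H 0, H 1, H 2} := by
    rw [h0.1]
    congr 1
    rw [show ((↑({7, 8, 9} : Finset (Fin 17))) : Set (Fin 17)) = {7, 8, 9} by simp]
    rw [Set.image_insert_eq, Set.image_insert_eq, Set.image_singleton, hb7, hb8, hb9]
  exact ⟨htop, hvals, by rw [hm32.2]; rfl, by rw [hm1.2]; rfl, by rw [hm12.2]; rfl,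
    by rw [h0.2]; rfl, by rw [hp12.2]; rfl, by rw [hp1.2]; rfl, by rw [hp32.2]; rfl, hzspan⟩
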